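/- Let γ : [0,1] → ℝ² be a continuous rectifiable path of length ℓ and let ρ > 0. Then the 2-dimensional Lebesgue measure of the closed ρ-neighborhood of the image of γ, i.e. of the set {x ∈ ℝ² : dist(x, γ([0,1])) ≤ ρ}, is at most 2ρℓ + πρ². (In particular, the area swept by a disc of radius 2r whose center moves along a path of length ℓ is at most 4rℓ + 4πr².) -/

import Mathlib

open MeasureTheory Metric Set
open scoped RealInnerProductSpace

local notation "E2" => EuclideanSpace ℝ (Fin 2)

lemma vol_cball (x : E2) {r : ℝ} (hr : 0 ≤ r) :
    volume (closedBall x r) = ENNReal.ofReal (Real.pi * r ^ 2) := by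
  rw [EuclideanSpace.volume_closedBall]
  simp only [Fintype.card_fin]
  rw [show ((2:ℕ) : ℝ) / 2 + 1 = 2 by norm_num, Real.Gamma_two]
  rw [Real.sq_sqrt Real.pi_pos.le, ← ENNReal.ofReal_pow hr, ← ENNReal.ofReal_mul (by positivity)]
  ring_nf

lemma vol_halfBall (p e : E2) (he : ‖e‖ = 1) {r : ℝ} (hr : 0 ≤ r) :
    volume {x : E2 | dist x p ≤ r ∧ ⟪x - p, e⟫ ≤ 0} = ENNReal.ofReal (Real.pi * r ^ 2) / 2 := by
  set K : Submodule ℝ E2 := (ℝ ∙ e)ᗮ with hK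
  have heK : e ∉ K := by
    simp only [hK, Submodule.mem_orthogonal_singleton_iff_inner_left]
    rw [real_inner_self_eq_norm_sq, he]; norm_num
  set R := K.reflection with hR
  have hRe : ∀ v : E2, ⟪R v, e⟫ = -⟪v, e⟫ := by
    intro v
    rw [Submodule.reflection_apply]
    have h0 : ⟪K.starProjection v, e⟫ = 0 := by
      have := K.starProjection_apply_mem v
      exact Submodule.mem_orthogonal_singleton_iff_inner_left.mp this
    rw [inner_sub_left, two_smul, inner_add_left, h0]
    ring
  set H1 := {x : E2 | dist x p ≤ r ∧ ⟪x - p, e⟫ ≤ 0} with hH1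
  set H2 := {x : E2 | dist x p ≤ r ∧ 0 ≤ ⟪x - p, e⟫} with hH2
  have hc : Continuous fun x : E2 => (⟪x - p, e⟫ : ℝ) :=
    (continuous_sub_right p).inner continuous_const
  have hcl1 : IsClosed H1 := by
    apply IsClosed.inter
    · exact isClosed_le (continuous_id.dist continuous_const) continuous_const
    · exact isClosed_le hc continuous_const
  have hcl2 : IsClosed H2 := by
    apply IsClosed.inter
    · exact isClosed_le (continuous_id.dist continuous_const) continuous_const
    · exact isClosed_le continuous_const hc
  have hphi : MeasurePreserving (fun x : E2 => p + R (x - p)) volume volume := by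
    have h1 : MeasurePreserving (fun x : E2 => x - p) volume volume :=
      measurePreserving_sub_right volume p
    have h2 : MeasurePreserving (R : E2 → E2) volume volume :=
      R.measurePreserving
    have h3 : MeasurePreserving (fun x : E2 => p + x) volume volume :=
      measurePreserving_add_left volume p
    exact (h3.comp h2).comp h1
  have hdist : ∀ x : E2, dist (p + R (x - p)) p = dist x p := by
    intro x
    rw [dist_eq_norm, add_sub_cancel_left, R.norm_map, ← dist_eq_norm]
  have hpre : (fun x : E2 => p + R (x - p)) ⁻¹' H2 = H1 := by
    ext x
    simp only [hH1, hH2, mem_preimage, mem_setOf_eq, add_sub_cancel_left, hdist, hRe]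
    constructor
    · rintro ⟨h1, h2⟩; exact ⟨h1, by linarith⟩
    · rintro ⟨h1, h2⟩; exact ⟨h1, by linarith⟩
  have heq : volume H1 = volume H2 := by
    rw [← hpre, hphi.measure_preimage hcl2.measurableSet.nullMeasurableSet]
  have hunion : H1 ∪ H2 = closedBall p r := by
    ext x
    simp only [hH1, hH2, mem_union, mem_setOf_eq, mem_closedBall]
    rcases le_total (⟪x - p, e⟫ : ℝ) 0 with h | h <;> tauto
  have hinter : volume (H1 ∩ H2) = 0 := by
    have hsub : H1 ∩ H2 ⊆ (fun x : E2 => x - p) ⁻¹' (K : Set E2) := by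
      rintro x ⟨⟨-, h1⟩, -, h2⟩
      simp only [mem_preimage, SetLike.mem_coe]
      exact Submodule.mem_orthogonal_singleton_iff_inner_left.mpr (le_antisymm h1 h2)
    refine measure_mono_null hsub ?_
    rw [(measurePreserving_sub_right volume p).measure_preimage
      (K.closed_of_finiteDimensional.measurableSet.nullMeasurableSet)]
    exact Measure.addHaar_submodule _ K (fun h => heK (h ▸ Submodule.mem_top))
  have hsum : volume H1 + volume H2 = ENNReal.ofReal (Real.pi * r ^ 2) := by
    rw [← measure_union_add_inter H1 hcl2.measurableSet, hunion, hinter, add_zero,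
      vol_cball p hr]
  rw [← heq, ← two_mul] at hsum
  rw [ENNReal.eq_div_iff two_ne_zero ENNReal.ofNat_ne_top, hsum]



private lemma real_aux1 {s c w r : ℝ} (hr : 0 ≤ r) (hkey : (s - c) ^ 2 + w ^ 2 ≤ r ^ 2) :
    -r ≤ w ∧ w ≤ r := by
  constructor <;> nlinarith [sq_nonneg (s - c)]

private lemma real_aux2 {a r : ℝ} (ha : 0 ≤ a) (hr : 0 ≤ r) (h : a ^ 2 ≤ r ^ 2) : a ≤ r := by
  nlinarith

private lemma real_aux3 {s c w r : ℝ} (hc0 : 0 ≤ c) (hs : s < 0)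
    (hkey : (s - c) ^ 2 + w ^ 2 ≤ r ^ 2) : s ^ 2 + w ^ 2 ≤ r ^ 2 := by nlinarith

private lemma real_aux4 {s c w r d : ℝ} (hcd : c ≤ d) (hs : d < s)
    (hkey : (s - c) ^ 2 + w ^ 2 ≤ r ^ 2) : (s - d) ^ 2 + w ^ 2 ≤ r ^ 2 := by nlinarith

lemma vol_stadium (p q : E2) {r : ℝ} (hr : 0 ≤ r) :
    volume {x : E2 | infDist x (segment ℝ p q) ≤ r} ≤
      ENNReal.ofReal (2 * r * dist p q + Real.pi * r ^ 2) := by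
  rcases eq_or_ne p q with rfl | hpq
  · have hs : {x : E2 | infDist x (segment ℝ p p) ≤ r} = closedBall p r := by
      ext x
      simp [segment_same, mem_closedBall]
    rw [hs, vol_cball p hr]
    apply ENNReal.ofReal_le_ofReal
    have : (0:ℝ) ≤ 2 * r * dist p p := by positivity
    linarith
  · set d : ℝ := dist p q with hd'
    have hd : 0 < d := dist_pos.mpr hpq
    set e : E2 := d⁻¹ • (q - p) with he'
    have hqp : ‖q - p‖ = d := by rw [hd', dist_eq_norm, norm_sub_rev]
    have he : ‖e‖ = 1 := by
      rw [he', norm_smul, hqp, norm_inv, Real.norm_eq_abs, abs_of_pos hd, inv_mul_cancel₀ hd.ne']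
    have hqpe : q - p = d • e := by
      rw [he', smul_smul, mul_inv_cancel₀ hd.ne', one_smul]
    -- orthonormal basis with b 0 = e
    have hortho : Orthonormal ℝ (Set.restrict {(0 : Fin 2)} fun _ => e) := by
      refine ⟨fun i => he, ?_⟩
      intro i j hij
      exact absurd (Subtype.ext (i.2.trans j.2.symm)) hij
    obtain ⟨b, hb⟩ := hortho.exists_orthonormalBasis_extension_of_card_eq
      (by simp [finrank_euclideanSpace])
    have hb0 : b 0 = e := hb 0 rfl
    have hbe : ⟪b 1, e⟫ = 0 := by
      rw [← hb0]
      exact b.orthonormal.2 (by decide)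
    have hee : ⟪e, e⟫ = 1 := by rw [real_inner_self_eq_norm_sq, he]; norm_num
    have hnorm : ∀ v : E2, ‖v‖ ^ 2 = ⟪e, v⟫ ^ 2 + ⟪b 1, v⟫ ^ 2 := by
      intro v
      have h1 : ‖v‖ = ‖b.repr v‖ := (b.repr.norm_map v).symm
      rw [h1, EuclideanSpace.norm_eq, Real.sq_sqrt (by positivity), Fin.sum_univ_two, ← hb0]
      simp [b.repr_apply_apply, Real.norm_eq_abs, sq_abs]
    -- the three pieces
    set A : Set (Fin 2 → ℝ) :=
      Set.pi univ (fun i => if i = 0 then Icc 0 d else Icc (-r) r) with hA'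
    have hΦ : MeasurePreserving
        (fun x : E2 => (MeasurableEquiv.toLp 2 (Fin 2 → ℝ)).symm (b.repr (x - p)))
        volume volume :=
      ((EuclideanSpace.volume_preserving_symm_measurableEquiv_toLp (Fin 2)).comp
        b.measurePreserving_repr).comp (measurePreserving_sub_right volume p)
    set R : Set E2 :=
      (fun x : E2 => (MeasurableEquiv.toLp 2 (Fin 2 → ℝ)).symm (b.repr (x - p))) ⁻¹' A with hR'
    have hRmem : ∀ x : E2,
        x ∈ R ↔ (⟪e, x - p⟫ ∈ Icc 0 d ∧ ⟪b 1, x - p⟫ ∈ Icc (-r) r) := by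
      intro x
      simp only [hR', hA', mem_preimage, Set.mem_pi, mem_univ, true_implies]
      rw [Fin.forall_fin_two]
      simp only [if_pos rfl, if_neg (by decide : (1 : Fin 2) ≠ 0)]
      have h0 : (MeasurableEquiv.toLp 2 (Fin 2 → ℝ)).symm (b.repr (x - p)) 0
          = ⟪e, x - p⟫ := by
        rw [← hb0]; exact b.repr_apply_apply (x - p) 0
      have h1 : (MeasurableEquiv.toLp 2 (Fin 2 → ℝ)).symm (b.repr (x - p)) 1
          = ⟪b 1, x - p⟫ := b.repr_apply_apply (x - p) 1
      rw [h0, h1]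
      simp
    set Hp : Set E2 := {x : E2 | dist x p ≤ r ∧ ⟪x - p, e⟫ ≤ 0} with hHp'
    set Hq : Set E2 := {x : E2 | dist x q ≤ r ∧ ⟪x - q, -e⟫ ≤ 0} with hHq'
    -- the covering
    have hcov : {x : E2 | infDist x (segment ℝ p q) ≤ r} ⊆ R ∪ (Hp ∪ Hq) := by
      intro x hx
      simp only [mem_setOf_eq] at hx
      have hseg : IsCompact (segment ℝ p q) := by
        rw [segment_eq_image']
        exact isCompact_Icc.image (continuous_const.add (continuous_id.smul continuous_const))
      obtain ⟨y, hy, hxy⟩ := hseg.exists_infDist_eq_dist ⟨p, left_mem_segment ℝ p q⟩ x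
      rw [hxy] at hx
      rw [segment_eq_image'] at hy
      obtain ⟨u, hu, rfl⟩ := hy
      set c : ℝ := u * d with hc'
      clear_value c
      have hc0 : 0 ≤ c := by rw [hc']; exact mul_nonneg hu.1 hd.le
      have hcd : c ≤ d := by
        rw [hc']
        nlinarith [hu.2, hd.le]
      have hyeq : p + u • (q - p) - p = c • e := by
        rw [add_sub_cancel_left, hqpe, smul_smul, hc']
      set s : ℝ := ⟪e, x - p⟫ with hs'
      set w : ℝ := ⟪b 1, x - p⟫ with hw'
      clear_value s w
      have hxy2 : x - (p + u • (q - p)) = (x - p) - c • e := by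
        rw [sub_sub, ← hyeq]; abel
      have hkey : (s - c) ^ 2 + w ^ 2 ≤ r ^ 2 := by
        have h2 : dist x (p + u • (q - p)) ^ 2 ≤ r ^ 2 :=
          pow_le_pow_left₀ dist_nonneg hx 2
        rw [dist_eq_norm, hnorm, hxy2] at h2
        simp only [inner_sub_right, real_inner_smul_right, hee, hbe, mul_one, mul_zero,
          sub_zero] at h2
        have hs2 : s = ⟪e, x⟫ - ⟪e, p⟫ := by rw [hs', inner_sub_right]
        have hw2 : w = ⟪b 1, x⟫ - ⟪b 1, p⟫ := by rw [hw', inner_sub_right]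
        rw [hs2, hw2]
        exact h2
      rcases lt_or_ge s 0 with hsneg | hs0
      · refine Or.inr (Or.inl ?_)
        simp only [hHp', mem_setOf_eq]
        refine ⟨?_, ?_⟩
        · have h3 : ‖x - p‖ ^ 2 ≤ r ^ 2 := by
            rw [hnorm, ← hs', ← hw']
            exact real_aux3 hc0 hsneg hkey
          rw [dist_eq_norm]
          exact real_aux2 (norm_nonneg _) hr h3
        · rw [real_inner_comm, ← hs']; exact hsneg.le
      rcases le_or_gt s d with hsd | hsd
      · refine Or.inl ?_
        rw [hRmem, ← hs', ← hw']
        obtain ⟨h1, h2⟩ := real_aux1 hr hkey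
        exact ⟨⟨hs0, hsd⟩, h1, h2⟩
      · refine Or.inr (Or.inr ?_)
        simp only [hHq', mem_setOf_eq]
        have hxq : x - q = (x - p) - d • e := by
          rw [← hqpe]; abel
        have hsq : ⟪e, x - q⟫ = s - d := by
          rw [hxq, inner_sub_right, real_inner_smul_right, hee, mul_one, hs']
        have hwq : ⟪b 1, x - q⟫ = w := by
          rw [hxq, inner_sub_right, real_inner_smul_right, hbe, mul_zero, sub_zero, hw']
        refine ⟨?_, ?_⟩
        · have h3 : ‖x - q‖ ^ 2 ≤ r ^ 2 := by
            rw [hnorm, hsq, hwq]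
            exact real_aux4 hcd hsd hkey
          rw [dist_eq_norm]
          exact real_aux2 (norm_nonneg _) hr h3
        · rw [inner_neg_right, real_inner_comm, hsq]
          linarith
    -- volumes
    have hvolR : volume R ≤ ENNReal.ofReal (2 * r * d) := by
      have hAm : MeasurableSet A := by
        rw [hA']
        exact MeasurableSet.univ_pi fun i => by split <;> exact measurableSet_Icc
      rw [hR', hΦ.measure_preimage hAm.nullMeasurableSet]
      rw [hA', volume_pi_pi, Fin.prod_univ_two]
      rw [if_pos rfl, if_neg (by decide : ¬ (1 : Fin 2) = 0)]
      rw [Real.volume_Icc, Real.volume_Icc, ← ENNReal.ofReal_mul (by linarith)]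
      apply ENNReal.ofReal_le_ofReal
      nlinarith
    have hvolHp : volume Hp = ENNReal.ofReal (Real.pi * r ^ 2) / 2 := vol_halfBall p e he hr
    have hvolHq : volume Hq = ENNReal.ofReal (Real.pi * r ^ 2) / 2 :=
      vol_halfBall q (-e) (by rw [norm_neg, he]) hr
    calc volume {x : E2 | infDist x (segment ℝ p q) ≤ r} ≤ volume (R ∪ (Hp ∪ Hq)) :=
          measure_mono hcov
      _ ≤ volume R + (volume Hp + volume Hq) :=
          le_trans (measure_union_le _ _) (by gcongr; exact measure_union_le _ _)
      _ ≤ ENNReal.ofReal (2 * r * d) +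
          (ENNReal.ofReal (Real.pi * r ^ 2) / 2 + ENNReal.ofReal (Real.pi * r ^ 2) / 2) := by
          rw [hvolHp, hvolHq]; gcongr
      _ = ENNReal.ofReal (2 * r * d) + ENNReal.ofReal (Real.pi * r ^ 2) := by
          rw [ENNReal.add_halves]
      _ = ENNReal.ofReal (2 * r * dist p q + Real.pi * r ^ 2) := by
          rw [← ENNReal.ofReal_add (by positivity) (by positivity)]



lemma vol_chain (P : ℕ → E2) {r : ℝ} (hr : 0 ≤ r) (n : ℕ) :
    volume (⋃ i ∈ Finset.range n, {x : E2 | infDist x (segment ℝ (P i) (P (i + 1))) ≤ r}) ≤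
      ENNReal.ofReal (Real.pi * r ^ 2) +
        ∑ i ∈ Finset.range n, ENNReal.ofReal (2 * r * dist (P i) (P (i + 1))) := by
  set T : ℕ → Set E2 := fun i => {x : E2 | infDist x (segment ℝ (P i) (P (i + 1))) ≤ r} with hT
  have hTvol : ∀ i, volume (T i) ≤
      ENNReal.ofReal (2 * r * dist (P i) (P (i + 1))) + ENNReal.ofReal (Real.pi * r ^ 2) := by
    intro i
    refine le_trans (vol_stadium (P i) (P (i + 1)) hr) ?_
    rw [← ENNReal.ofReal_add (by positivity) (by positivity)]
  have hTmeas : ∀ i, MeasurableSet (T i) :=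
    fun i => (isClosed_le (continuous_infDist_pt _) continuous_const).measurableSet
  have hTball : ∀ i (z : E2), z ∈ segment ℝ (P i) (P (i + 1)) → closedBall z r ⊆ T i := by
    intro i z hz x hx
    exact le_trans (infDist_le_dist_of_mem hz) hx
  induction n with
  | zero => simp
  | succ n ih =>
    rcases Nat.eq_zero_or_pos n with rfl | hn
    · rw [Finset.range_one, Finset.set_biUnion_singleton, Finset.sum_singleton]
      refine le_trans (hTvol 0) ?_
      rw [add_comm]
    · have hn1 : n - 1 + 1 = n := Nat.succ_pred_eq_of_pos hn
      have hunion : (⋃ i ∈ Finset.range (n + 1), T i) = (⋃ i ∈ Finset.range n, T i) ∪ T n := by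
        rw [Finset.range_add_one, Finset.set_biUnion_insert, union_comm]
      have hball : closedBall (P n) r ⊆ (⋃ i ∈ Finset.range n, T i) ∩ T n := by
        intro x hx
        have hmem : P n ∈ segment ℝ (P (n - 1)) (P (n - 1 + 1)) := by
          rw [hn1]
          exact right_mem_segment ℝ _ _
        refine ⟨mem_biUnion (Finset.mem_range.mpr (Nat.sub_lt hn one_pos))
          (hTball (n - 1) (P n) hmem hx), hTball n (P n) (left_mem_segment ℝ _ _) hx⟩
      have hkey : volume (⋃ i ∈ Finset.range (n + 1), T i) + ENNReal.ofReal (Real.pi * r ^ 2)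
          ≤ (ENNReal.ofReal (Real.pi * r ^ 2) +
              ∑ i ∈ Finset.range (n + 1), ENNReal.ofReal (2 * r * dist (P i) (P (i + 1))))
            + ENNReal.ofReal (Real.pi * r ^ 2) := by
        calc volume (⋃ i ∈ Finset.range (n + 1), T i) + ENNReal.ofReal (Real.pi * r ^ 2)
            ≤ volume ((⋃ i ∈ Finset.range n, T i) ∪ T n)
              + volume ((⋃ i ∈ Finset.range n, T i) ∩ T n) := by
              rw [hunion]
              gcongr
              rw [← vol_cball (P n) hr]
              exact measure_mono hball
          _ = volume (⋃ i ∈ Finset.range n, T i) + volume (T n) :=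
              measure_union_add_inter _ (hTmeas n)
          _ ≤ (ENNReal.ofReal (Real.pi * r ^ 2) +
                ∑ i ∈ Finset.range n, ENNReal.ofReal (2 * r * dist (P i) (P (i + 1))))
              + (ENNReal.ofReal (2 * r * dist (P n) (P (n + 1)))
                + ENNReal.ofReal (Real.pi * r ^ 2)) := add_le_add ih (hTvol n)
          _ = (ENNReal.ofReal (Real.pi * r ^ 2) +
                ∑ i ∈ Finset.range (n + 1), ENNReal.ofReal (2 * r * dist (P i) (P (i + 1))))
              + ENNReal.ofReal (Real.pi * r ^ 2) := by
              rw [Finset.sum_range_succ]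
              ring
      exact (ENNReal.add_le_add_iff_right ENNReal.ofReal_ne_top).mp hkey


theorem neighborhood_area_le (γ : ℝ → EuclideanSpace ℝ (Fin 2)) (ℓ ρ : ℝ)
    (hρ : 0 < ρ)
    (hcont : ContinuousOn γ (Set.Icc 0 1))
    (hrect : eVariationOn γ (Set.Icc 0 1) ≠ ⊤)
    (hlen : ℓ = (eVariationOn γ (Set.Icc 0 1)).toReal) :
    volume {x : EuclideanSpace ℝ (Fin 2) |
        Metric.infDist x (γ '' Set.Icc 0 1) ≤ ρ} ≤
      ENNReal.ofReal (2 * ρ * ℓ + Real.pi * ρ ^ 2) := by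
  have hℓ0 : 0 ≤ ℓ := hlen ▸ ENNReal.toReal_nonneg
  have main : ∀ ε : ℝ, 0 < ε → volume {x : E2 | infDist x (γ '' Icc 0 1) ≤ ρ} ≤
      ENNReal.ofReal (2 * (ρ + ε) * ℓ + Real.pi * (ρ + ε) ^ 2) := by
    intro ε hε
    obtain ⟨δ, hδ, hδ2⟩ := Metric.uniformContinuousOn_iff.mp
      (isCompact_Icc.uniformContinuousOn_of_continuous hcont) ε hε
    obtain ⟨n, hn0, hn⟩ : ∃ n : ℕ, 0 < n ∧ 1 / (n : ℝ) < δ := by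
      obtain ⟨n, hn⟩ := exists_nat_one_div_lt hδ
      exact ⟨n + 1, Nat.succ_pos n, by exact_mod_cast hn⟩
    have hnR : (0 : ℝ) < n := by exact_mod_cast hn0
    set u : ℕ → ℝ := fun i => min ((i : ℝ) / n) 1 with hu'
    have humem : ∀ i, u i ∈ Icc (0 : ℝ) 1 := by
      intro i
      exact ⟨le_min (by positivity) zero_le_one, min_le_right _ _⟩
    have humono : Monotone u := by
      intro a b hab
      refine min_le_min ((div_le_div_iff_of_pos_right hnR).mpr ?_) le_rfl
      exact_mod_cast hab
    set P : ℕ → E2 := fun i => γ (u i) with hP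
    set r : ℝ := ρ + ε with hr'
    have hr : 0 ≤ r := by positivity
    -- covering
    have hcov : {x : E2 | infDist x (γ '' Icc 0 1) ≤ ρ} ⊆
        ⋃ i ∈ Finset.range n, {x : E2 | infDist x (segment ℝ (P i) (P (i + 1))) ≤ r} := by
      intro x hx
      simp only [mem_setOf_eq] at hx
      have hK : IsCompact (γ '' Icc 0 1) := isCompact_Icc.image_of_continuousOn hcont
      have hne : (γ '' Icc 0 1).Nonempty :=
        ⟨γ 0, mem_image_of_mem γ (by constructor <;> norm_num)⟩
      obtain ⟨y, hy, hxy⟩ := hK.exists_infDist_eq_dist hne x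
      rw [hxy] at hx
      obtain ⟨t, ht, rfl⟩ := hy
      set i : ℕ := min (n - 1) ⌊t * n⌋₊ with hi'
      have hin : i < n := lt_of_le_of_lt (min_le_left _ _) (Nat.sub_lt hn0 one_pos)
      have hti : |t - (i : ℝ) / n| ≤ 1 / n := by
        rcases le_or_gt ⌊t * n⌋₊ (n - 1) with hc | hc
        · have hie : i = ⌊t * n⌋₊ := min_eq_right hc
          have h1 : (⌊t * n⌋₊ : ℝ) ≤ t * n := Nat.floor_le (mul_nonneg ht.1 hnR.le)
          have h2 : t * n < (⌊t * n⌋₊ : ℝ) + 1 := Nat.lt_floor_add_one _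
          have hl : (⌊t * n⌋₊ : ℝ) / n ≤ t := by rw [div_le_iff₀ hnR]; exact h1
          have hu2 : t ≤ ((⌊t * n⌋₊ : ℝ) + 1) / n := by rw [le_div_iff₀ hnR]; exact h2.le
          have hsplit : ((⌊t * n⌋₊ : ℝ) + 1) / n = (⌊t * n⌋₊ : ℝ) / n + 1 / n := by ring
          have hpos : (0 : ℝ) < 1 / n := by positivity
          rw [hie, abs_le]
          constructor <;> [linarith; linarith [hsplit ▸ hu2]]
        · have hie : i = n - 1 := min_eq_left hc.le
          have h3 : (n : ℝ) ≤ ⌊t * n⌋₊ := by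
            have : n ≤ ⌊t * n⌋₊ := by omega
            exact_mod_cast this
          have h4 : (⌊t * n⌋₊ : ℝ) ≤ t * n := Nat.floor_le (mul_nonneg ht.1 hnR.le)
          have ht1 : t = 1 := le_antisymm ht.2 (by nlinarith)
          have hcast : ((n - 1 : ℕ) : ℝ) = (n : ℝ) - 1 := by
            rw [Nat.cast_sub hn0]
            norm_num
          have heq : 1 - ((n : ℝ) - 1) / n = 1 / n := by field_simp; ring
          rw [hie, hcast, ht1, heq, abs_of_pos (by positivity)]
      have hPi : P i = γ ((i : ℝ) / n) := by
        have hmin : u i = (i : ℝ) / n := min_eq_left (by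
          rw [div_le_one hnR]
          exact_mod_cast hin.le)
        show γ (u i) = _
        rw [hmin]
      have hdist : dist (γ t) (P i) < ε := by
        rw [hPi]
        apply hδ2 t ht ((i : ℝ) / n)
          ⟨by positivity, by rw [div_le_one hnR]; exact_mod_cast hin.le⟩
        rw [Real.dist_eq]
        exact lt_of_le_of_lt hti hn
      refine mem_biUnion (Finset.mem_range.mpr hin) ?_
      simp only [mem_setOf_eq]
      calc infDist x (segment ℝ (P i) (P (i + 1))) ≤ dist x (P i) :=
            infDist_le_dist_of_mem (left_mem_segment ℝ _ _)
        _ ≤ dist x (γ t) + dist (γ t) (P i) := dist_triangle _ _ _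
        _ ≤ ρ + ε := add_le_add hx hdist.le
    -- sum of distances is at most the length
    have hedist := eVariationOn.sum_le (f := γ) (n := n) humono humem
    have hsum : ∑ i ∈ Finset.range n, dist (P i) (P (i + 1)) ≤ ℓ := by
      have h1 : ∑ i ∈ Finset.range n, dist (P i) (P (i + 1)) =
          (∑ i ∈ Finset.range n, edist (γ (u (i + 1))) (γ (u i))).toReal := by
        rw [ENNReal.toReal_sum (fun a _ => edist_ne_top _ _)]
        refine Finset.sum_congr rfl fun i _ => ?_
        rw [edist_dist, ENNReal.toReal_ofReal dist_nonneg, dist_comm]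
      rw [h1, hlen]
      exact ENNReal.toReal_mono hrect hedist
    refine le_trans (measure_mono hcov) (le_trans (vol_chain P hr n) ?_)
    have h2 : ∑ i ∈ Finset.range n, ENNReal.ofReal (2 * r * dist (P i) (P (i + 1)))
        = ENNReal.ofReal (∑ i ∈ Finset.range n, 2 * r * dist (P i) (P (i + 1))) := by
      rw [ENNReal.ofReal_sum_of_nonneg]
      intro i _
      positivity
    rw [h2, ← ENNReal.ofReal_add (by positivity) (by positivity)]
    apply ENNReal.ofReal_le_ofReal
    rw [← Finset.mul_sum]
    nlinarith [hsum]
  have hcont2 : Filter.Tendsto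
      (fun ε : ℝ => ENNReal.ofReal (2 * (ρ + ε) * ℓ + Real.pi * (ρ + ε) ^ 2))
      (nhdsWithin 0 (Ioi 0)) (nhds (ENNReal.ofReal (2 * ρ * ℓ + Real.pi * ρ ^ 2))) := by
    have hc : Continuous
        (fun ε : ℝ => ENNReal.ofReal (2 * (ρ + ε) * ℓ + Real.pi * (ρ + ε) ^ 2)) :=
      ENNReal.continuous_ofReal.comp (by continuity)
    have h0 := hc.tendsto 0
    simp only [add_zero] at h0
    exact h0.mono_left nhdsWithin_le_nhds
  refine ge_of_tendsto hcont2 ?_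
  filter_upwards [self_mem_nhdsWithin] with ε hε
  exact main ε hε
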